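/- Let y₁,…,y_m ∈ ℝ³ be unit vectors and let c₁, c₂, c₃, c₄, c₅ be positive constants with c₁ c₃ > c₂². Define the 6×6 matrices A = [[0, −I₃],[c₄ Σ_{i=1}^m π_{y_i}, c₅ I₃]] and Q = [[c₃ Σ_{i=1}^m π_{y_i}, c₂ Σ_{i=1}^m π_{y_i}],[c₂ Σ_{i=1}^m π_{y_i}, m c₁ I₃]]. Then there exists a constant c > 0, depending only on c₁,…,c₅ and m (one may take c = (l_A/l_Q)·m with l_Q = λ_min([[c₃, c₂],[c₂, c₁]]) and l_A = λ_max([[c₄², c₅c₄],[c₅c₄, c₅²+1]])), such that c Q − Aᵀ A ≥ 0. -/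

import Mathlib

open Matrix

noncomputable section

/-- Projector onto the plane orthogonal to the unit vector `y`: `π_y = I₃ - y yᵀ`. -/
def proj (y : Fin 3 → ℝ) : Matrix (Fin 3) (Fin 3) ℝ := 1 - Matrix.vecMulVec y y

/-- Smallest eigenvalue of the symmetric 2×2 matrix `[[a, b],[b, d]]`. -/
def eigMin2 (a b d : ℝ) : ℝ := ((a + d) - Real.sqrt ((a - d) ^ 2 + 4 * b ^ 2)) / 2

/-- Largest eigenvalue of the symmetric 2×2 matrix `[[a, b],[b, d]]`. -/
def eigMax2 (a b d : ℝ) : ℝ := ((a + d) + Real.sqrt ((a - d) ^ 2 + 4 * b ^ 2)) / 2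

namespace Stmt12Aux

lemma quadMin {a b d l : ℝ} (ha : 0 < a - l) (hb : b ^ 2 ≤ (a - l) * (d - l))
    (s t : ℝ) : l * (s ^ 2 + t ^ 2) ≤ a * s ^ 2 + 2 * b * s * t + d * t ^ 2 := by
  nlinarith [sq_nonneg ((a - l) * s + b * t), sq_nonneg t, sq_nonneg s, ha.le]

lemma quadMax {a b d l : ℝ} (ha : 0 < l - a) (hb : b ^ 2 ≤ (l - a) * (l - d))
    (s t : ℝ) : a * s ^ 2 + 2 * b * s * t + d * t ^ 2 ≤ l * (s ^ 2 + t ^ 2) := by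
  nlinarith [sq_nonneg ((l - a) * s - b * t), sq_nonneg t, sq_nonneg s, ha.le]

lemma proj_transpose (y : Fin 3 → ℝ) : (proj y)ᵀ = proj y := by
  ext i j
  simp [proj, transpose_apply, vecMulVec_apply, mul_comm, one_apply, eq_comm]

lemma proj_mulVec (y v : Fin 3 → ℝ) : proj y *ᵥ v = v - (y ⬝ᵥ v) • y := by
  unfold proj
  rw [sub_mulVec, one_mulVec]
  congr 1
  ext i
  simp [vecMulVec, mulVec, dotProduct, Finset.mul_sum, Finset.sum_mul]
  congr 1; ext x; ring

lemma proj_idem (y : Fin 3 → ℝ) (hy : y ⬝ᵥ y = 1) (v : Fin 3 → ℝ) :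
    proj y *ᵥ (proj y *ᵥ v) = proj y *ᵥ v := by
  rw [proj_mulVec, proj_mulVec (v := v)]
  simp [dotProduct_sub, dotProduct_smul, hy, dotProduct_comm y v]

lemma dot_nonneg (v : Fin 3 → ℝ) : 0 ≤ v ⬝ᵥ v :=
  Finset.sum_nonneg fun _ _ => mul_self_nonneg _

lemma vecMul_proj (y z : Fin 3 → ℝ) : z ᵥ* proj y = proj y *ᵥ z := by
  conv_lhs => rw [← proj_transpose y]
  rw [vecMul_transpose]

/-- `u ⬝ (π v) = (π u) ⬝ (π v)`. -/
lemma dot_proj (y : Fin 3 → ℝ) (hy : y ⬝ᵥ y = 1) (u v : Fin 3 → ℝ) :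
    u ⬝ᵥ (proj y *ᵥ v) = (proj y *ᵥ u) ⬝ᵥ (proj y *ᵥ v) := by
  rw [dotProduct_mulVec, dotProduct_mulVec, vecMul_proj, vecMul_proj, proj_idem y hy]

lemma proj_contract (y : Fin 3 → ℝ) (v : Fin 3 → ℝ) :
    v ⬝ᵥ (proj y *ᵥ v) ≤ v ⬝ᵥ v := by
  rw [proj_mulVec]
  have h : v ⬝ᵥ (y ⬝ᵥ v) • y = (y ⬝ᵥ v) ^ 2 := by
    rw [dotProduct_smul, dotProduct_comm]; ring_nf
  rw [dotProduct_sub, h]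
  nlinarith [sq_nonneg (y ⬝ᵥ v)]

lemma sum_mulVec' {k : ℕ} (M : Fin k → Matrix (Fin 3) (Fin 3) ℝ) (v : Fin 3 → ℝ) :
    (∑ i, M i) *ᵥ v = ∑ i, M i *ᵥ v := by
  ext j
  simp [mulVec, dotProduct, Matrix.sum_apply, Finset.sum_mul]
  rw [Finset.sum_comm]

lemma dot_sum {k : ℕ} (u : Fin 3 → ℝ) (w : Fin k → Fin 3 → ℝ) :
    u ⬝ᵥ (∑ i, w i) = ∑ i, u ⬝ᵥ w i := by
  simp [dotProduct, Finset.mul_sum, Finset.sum_apply]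
  rw [Finset.sum_comm]

lemma sum_dot {k : ℕ} (u : Fin 3 → ℝ) (w : Fin k → Fin 3 → ℝ) :
    (∑ i, w i) ⬝ᵥ u = ∑ i, w i ⬝ᵥ u := by
  simp [dotProduct, Finset.sum_mul, Finset.sum_apply]
  rw [Finset.sum_comm]

/-- `‖∑ aᵢ‖² ≤ m ∑ ‖aᵢ‖²` (Cauchy–Schwarz for the sum). -/
lemma sum_sq_le {k : ℕ} (a : Fin k → Fin 3 → ℝ) :
    (∑ i, a i) ⬝ᵥ (∑ i, a i) ≤ (k : ℝ) * ∑ i, a i ⬝ᵥ a i := by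
  rw [sum_dot]
  have expand : ∀ i : Fin k, a i ⬝ᵥ (∑ j, a j) = ∑ j, a i ⬝ᵥ a j := fun i => dot_sum _ _
  rw [Finset.sum_congr rfl fun i _ => expand i]
  have step : ∀ i j : Fin k, a i ⬝ᵥ a j ≤ (a i ⬝ᵥ a i + a j ⬝ᵥ a j) / 2 := by
    intro i j
    have h0 := dot_nonneg (a i - a j)
    rw [dotProduct_sub, sub_dotProduct, sub_dotProduct, dotProduct_comm (a j) (a i)] at h0
    linarith
  calc ∑ i, ∑ j, a i ⬝ᵥ a j
      ≤ ∑ i : Fin k, ∑ j : Fin k, (a i ⬝ᵥ a i + a j ⬝ᵥ a j) / 2 :=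
        Finset.sum_le_sum fun i _ => Finset.sum_le_sum fun j _ => step i j
    _ = (k : ℝ) * ∑ i, a i ⬝ᵥ a i := by
        have inner : ∀ i : Fin k, ∑ j : Fin k, (a i ⬝ᵥ a i + a j ⬝ᵥ a j) / 2
            = (k : ℝ) * (a i ⬝ᵥ a i) / 2 + (∑ j, a j ⬝ᵥ a j) / 2 := by
          intro i
          rw [Finset.sum_congr rfl fun j _ => add_div (a i ⬝ᵥ a i) (a j ⬝ᵥ a j) 2,
            Finset.sum_add_distrib, Finset.sum_const, Finset.card_univ, Fintype.card_fin,
            ← Finset.sum_div, nsmul_eq_mul]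
          ring
        rw [Finset.sum_congr rfl fun i _ => inner i, Finset.sum_add_distrib,
          Finset.sum_const, Finset.card_univ, Fintype.card_fin, nsmul_eq_mul,
          ← Finset.sum_div, ← Finset.mul_sum]
        ring

end Stmt12Aux

open Stmt12Aux

set_option maxHeartbeats 2000000 in
theorem stmt12
    (m : ℕ) (hm : 1 ≤ m) (c1 c2 c3 c4 c5 : ℝ)
    (hc1 : 0 < c1) (hc2 : 0 < c2) (hc3 : 0 < c3) (hc4 : 0 < c4) (hc5 : 0 < c5)
    (hdet : c1 * c3 > c2 ^ 2) :
    ∃ c : ℝ, 0 < c ∧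
      c = eigMax2 (c4 ^ 2) (c5 * c4) (c5 ^ 2 + 1) / eigMin2 c3 c2 c1 * (m : ℝ) ∧
      ∀ y : Fin m → (Fin 3 → ℝ), (∀ i, y i ⬝ᵥ y i = 1) →
        (c • (Matrix.fromBlocks
              (c3 • ∑ i, proj (y i)) (c2 • ∑ i, proj (y i))
              (c2 • ∑ i, proj (y i)) (((m : ℝ) * c1) • 1)
            : Matrix (Fin 3 ⊕ Fin 3) (Fin 3 ⊕ Fin 3) ℝ) -
          (Matrix.fromBlocks 0 (-1) (c4 • ∑ i, proj (y i)) (c5 • 1)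
            : Matrix (Fin 3 ⊕ Fin 3) (Fin 3 ⊕ Fin 3) ℝ)ᵀ *
          (Matrix.fromBlocks 0 (-1) (c4 • ∑ i, proj (y i)) (c5 • 1))).PosSemidef := by
  set lQ := eigMin2 c3 c2 c1 with hlQdef
  set lA := eigMax2 (c4 ^ 2) (c5 * c4) (c5 ^ 2 + 1) with hlAdef
  have hS0 : (0:ℝ) ≤ (c3 - c1) ^ 2 + 4 * c2 ^ 2 := by positivity
  have hS2 : Real.sqrt ((c3 - c1) ^ 2 + 4 * c2 ^ 2) ^ 2 = (c3 - c1) ^ 2 + 4 * c2 ^ 2 :=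
    Real.sq_sqrt hS0
  have hSnn := Real.sqrt_nonneg ((c3 - c1) ^ 2 + 4 * c2 ^ 2)
  have h3Q : 0 < c3 - lQ := by
    rw [hlQdef]; unfold eigMin2; nlinarith [hS2, hSnn, hc2]
  have h1Q : 0 < c1 - lQ := by
    rw [hlQdef]; unfold eigMin2; nlinarith [hS2, hSnn, hc2]
  have hprodQ : (c3 - lQ) * (c1 - lQ) = c2 ^ 2 := by
    rw [hlQdef]; unfold eigMin2; linear_combination hS2 / 4
  have hlQpos : 0 < lQ := by
    rw [hlQdef]; unfold eigMin2; nlinarith [hS2, hSnn, hdet, hc1, hc3]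
  have hT0 : (0:ℝ) ≤ (c4 ^ 2 - (c5 ^ 2 + 1)) ^ 2 + 4 * (c5 * c4) ^ 2 := by positivity
  have hT2 : Real.sqrt ((c4 ^ 2 - (c5 ^ 2 + 1)) ^ 2 + 4 * (c5 * c4) ^ 2) ^ 2
      = (c4 ^ 2 - (c5 ^ 2 + 1)) ^ 2 + 4 * (c5 * c4) ^ 2 := Real.sq_sqrt hT0
  have hTnn := Real.sqrt_nonneg ((c4 ^ 2 - (c5 ^ 2 + 1)) ^ 2 + 4 * (c5 * c4) ^ 2)
  have haA : 0 < lA - c4 ^ 2 := by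
    rw [hlAdef]; unfold eigMax2; nlinarith [hT2, hTnn, hc4, hc5, mul_pos hc4 hc5]
  have hdA : 0 < lA - (c5 ^ 2 + 1) := by
    rw [hlAdef]; unfold eigMax2; nlinarith [hT2, hTnn, hc4, hc5, mul_pos hc4 hc5]
  have hprodA : (lA - c4 ^ 2) * (lA - (c5 ^ 2 + 1)) = (c5 * c4) ^ 2 := by
    rw [hlAdef]; unfold eigMax2; linear_combination hT2 / 4
  have hlApos : 0 < lA := by nlinarith [sq_nonneg c4, haA, hc4]
  have hmpos : (0:ℝ) < (m : ℝ) := by exact_mod_cast Nat.lt_of_lt_of_le Nat.zero_lt_one hm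
  have hm1 : (1:ℝ) ≤ (m : ℝ) := by exact_mod_cast hm
  refine ⟨lA / lQ * m, by positivity, rfl, ?_⟩
  intro y hy
  set c : ℝ := lA / lQ * m with hcdef
  have hcpos : 0 < c := by positivity
  have hclQ : c * lQ = lA * m := by
    rw [hcdef]; field_simp
  set P : Matrix (Fin 3) (Fin 3) ℝ := ∑ i, proj (y i) with hPdef
  have hPsym : Pᵀ = P := by
    rw [hPdef, transpose_sum]
    exact Finset.sum_congr rfl fun i _ => proj_transpose (y i)
  set Q : Matrix (Fin 3 ⊕ Fin 3) (Fin 3 ⊕ Fin 3) ℝ :=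
    fromBlocks (c3 • P) (c2 • P) (c2 • P) (((m : ℝ) * c1) • 1) with hQdef
  set A : Matrix (Fin 3 ⊕ Fin 3) (Fin 3 ⊕ Fin 3) ℝ :=
    fromBlocks 0 (-1) (c4 • P) (c5 • 1) with hAdef
  have hQsym : Qᵀ = Q := by
    simp only [hQdef, fromBlocks_transpose, transpose_smul, transpose_one, hPsym]
  rw [posSemidef_iff_dotProduct_mulVec]
  constructor
  · -- Hermitian part
    show (c • Q - Aᵀ * A)ᴴ = c • Q - Aᵀ * A
    rw [conjTranspose_eq_transpose_of_trivial, transpose_sub, transpose_smul,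
      transpose_mul, transpose_transpose, hQsym]
  · intro x
    have hstar : star x = x := by simp
    rw [hstar]
    obtain ⟨u, v, rfl⟩ : ∃ u v, x = Sum.elim u v :=
      ⟨x ∘ Sum.inl, x ∘ Sum.inr, (Sum.elim_comp_inl_inr x).symm⟩
    set p : Fin 3 → ℝ := P *ᵥ u with hpdef
    set w : Fin 3 → ℝ := c4 • p + c5 • v with hwdef
    -- quadratic form of AᵀA
    have hAx : A *ᵥ Sum.elim u v = Sum.elim (-v) w := by
      simp only [hAdef, fromBlocks_mulVec, Sum.elim_comp_inl, Sum.elim_comp_inr,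
        zero_mulVec, Matrix.neg_mulVec, one_mulVec, zero_add, smul_mulVec,
        hwdef, hpdef]
    have hATA : Sum.elim u v ⬝ᵥ ((Aᵀ * A) *ᵥ Sum.elim u v) = v ⬝ᵥ v + w ⬝ᵥ w := by
      rw [← mulVec_mulVec, dotProduct_mulVec, vecMul_transpose, hAx,
        sumElim_dotProduct_sumElim]
      simp [dotProduct_neg, neg_dotProduct]
    -- quadratic form of Q
    have hQx : Sum.elim u v ⬝ᵥ (Q *ᵥ Sum.elim u v) =
        c3 * (u ⬝ᵥ (P *ᵥ u)) + c2 * (u ⬝ᵥ (P *ᵥ v)) + c2 * (v ⬝ᵥ (P *ᵥ u))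
          + (m : ℝ) * c1 * (v ⬝ᵥ v) := by
      rw [hQdef, fromBlocks_mulVec, sumElim_dotProduct_sumElim]
      simp only [Sum.elim_comp_inl, Sum.elim_comp_inr, smul_mulVec, one_mulVec,
        dotProduct_add, dotProduct_smul, smul_eq_mul]
      ring
    have hsymdot : u ⬝ᵥ (P *ᵥ v) = v ⬝ᵥ (P *ᵥ u) := by
      rw [dotProduct_mulVec, ← vecMul_transpose, hPsym, dotProduct_comm]
    -- scalar quantities
    have hdiag : ∀ z : Fin 3 → ℝ, u ⬝ᵥ (P *ᵥ z) = ∑ i, (proj (y i) *ᵥ u) ⬝ᵥ (proj (y i) *ᵥ z) := by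
      intro z
      rw [hPdef, sum_mulVec', dot_sum]
      exact Finset.sum_congr rfl fun i _ => dot_proj (y i) (hy i) u z
    have hpu_sum : u ⬝ᵥ (P *ᵥ u) = ∑ i, (proj (y i) *ᵥ u) ⬝ᵥ (proj (y i) *ᵥ u) := hdiag u
    have hpu_nonneg : 0 ≤ u ⬝ᵥ (P *ᵥ u) := by
      rw [hpu_sum]; exact Finset.sum_nonneg fun i _ => dot_nonneg _
    have hvv_nonneg : 0 ≤ v ⬝ᵥ v := dot_nonneg v
    -- (1) p⬝p ≤ m * u⬝Pu
    have h1 : p ⬝ᵥ p ≤ (m : ℝ) * (u ⬝ᵥ (P *ᵥ u)) := by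
      rw [hpu_sum]
      have hps : p = ∑ i, proj (y i) *ᵥ u := by rw [hpdef, hPdef, sum_mulVec']
      rw [hps]
      exact sum_sq_le _
    -- (2) Q-form lower bound:  lQ * (u⬝Pu + m * v⬝v) ≤ c3*u⬝Pu + 2c2*u⬝Pv + c1*m*v⬝v
    have h2 : lQ * (u ⬝ᵥ (P *ᵥ u) + (m : ℝ) * (v ⬝ᵥ v)) ≤
        c3 * (u ⬝ᵥ (P *ᵥ u)) + 2 * c2 * (u ⬝ᵥ (P *ᵥ v)) + c1 * ((m : ℝ) * (v ⬝ᵥ v)) := by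
      have key : ∀ i : Fin m,
          lQ * ((proj (y i) *ᵥ u) ⬝ᵥ (proj (y i) *ᵥ u) + v ⬝ᵥ v) ≤
          c3 * ((proj (y i) *ᵥ u) ⬝ᵥ (proj (y i) *ᵥ u))
            + 2 * c2 * ((proj (y i) *ᵥ u) ⬝ᵥ (proj (y i) *ᵥ v)) + c1 * (v ⬝ᵥ v) := by
        intro i
        set a : Fin 3 → ℝ := proj (y i) *ᵥ u
        set b : Fin 3 → ℝ := proj (y i) *ᵥ v
        have hbb : b ⬝ᵥ b ≤ v ⬝ᵥ v := by
          have := proj_contract (y i) v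
          rwa [dot_proj (y i) (hy i) v v] at this
        have hcoord : lQ * (a ⬝ᵥ a + b ⬝ᵥ b) ≤
            c3 * (a ⬝ᵥ a) + 2 * c2 * (a ⬝ᵥ b) + c1 * (b ⬝ᵥ b) := by
          have hterm : ∀ j : Fin 3, lQ * (a j ^ 2 + b j ^ 2) ≤
              c3 * a j ^ 2 + 2 * c2 * a j * b j + c1 * b j ^ 2 :=
            fun j => quadMin h3Q (hprodQ.ge) (a j) (b j)
          have expand : ∀ z z' : Fin 3 → ℝ, z ⬝ᵥ z' = ∑ j, z j * z' j := fun _ _ => rfl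
          rw [expand a a, expand a b, expand b b]
          calc lQ * ((∑ j, a j * a j) + ∑ j, b j * b j)
              = ∑ j, lQ * (a j ^ 2 + b j ^ 2) := by
                rw [← Finset.sum_add_distrib, Finset.mul_sum]
                exact Finset.sum_congr rfl fun j _ => by ring
            _ ≤ ∑ j, (c3 * a j ^ 2 + 2 * c2 * a j * b j + c1 * b j ^ 2) :=
                Finset.sum_le_sum fun j _ => hterm j
            _ = c3 * (∑ j, a j * a j) + 2 * c2 * (∑ j, a j * b j) + c1 * ∑ j, b j * b j := by
                rw [Finset.sum_add_distrib, Finset.sum_add_distrib, Finset.mul_sum,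
                  Finset.mul_sum, Finset.mul_sum]
                congr 1
                · congr 1
                  · exact Finset.sum_congr rfl fun j _ => by ring
                  · exact Finset.sum_congr rfl fun j _ => by ring
                · exact Finset.sum_congr rfl fun j _ => by ring
        have hlQc1 : lQ ≤ c1 := by linarith
        nlinarith [hcoord, hbb, hlQc1, hbb]
      have hsum := Finset.sum_le_sum fun i (_ : i ∈ Finset.univ) => key i
      have lhs_eq : ∑ i, lQ * ((proj (y i) *ᵥ u) ⬝ᵥ (proj (y i) *ᵥ u) + v ⬝ᵥ v)
          = lQ * ((∑ i, (proj (y i) *ᵥ u) ⬝ᵥ (proj (y i) *ᵥ u)) + (m : ℝ) * (v ⬝ᵥ v)) := by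
        rw [← Finset.mul_sum, Finset.sum_add_distrib, Finset.sum_const, Finset.card_univ,
          Fintype.card_fin, nsmul_eq_mul]
      have rhs_eq : ∑ i, (c3 * ((proj (y i) *ᵥ u) ⬝ᵥ (proj (y i) *ᵥ u))
            + 2 * c2 * ((proj (y i) *ᵥ u) ⬝ᵥ (proj (y i) *ᵥ v)) + c1 * (v ⬝ᵥ v))
          = c3 * (∑ i, (proj (y i) *ᵥ u) ⬝ᵥ (proj (y i) *ᵥ u))
            + 2 * c2 * (∑ i, (proj (y i) *ᵥ u) ⬝ᵥ (proj (y i) *ᵥ v))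
            + c1 * ((m : ℝ) * (v ⬝ᵥ v)) := by
        rw [Finset.sum_add_distrib, Finset.sum_add_distrib, ← Finset.mul_sum, ← Finset.mul_sum,
          Finset.sum_const, Finset.card_univ, Fintype.card_fin, nsmul_eq_mul]
        ring
      rw [lhs_eq, rhs_eq] at hsum
      rw [hpu_sum, hdiag v]
      exact hsum
    -- (3) AᵀA-form upper bound: v⬝v + w⬝w ≤ lA * (p⬝p + v⬝v)
    have h3 : v ⬝ᵥ v + w ⬝ᵥ w ≤ lA * (p ⬝ᵥ p + v ⬝ᵥ v) := by
      have hterm : ∀ j : Fin 3, v j * v j + w j * w j ≤ lA * (p j * p j + v j * v j) := by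
        intro j
        have hq := quadMax haA (hprodA.ge) (p j) (v j)
        have hwj : w j = c4 * p j + c5 * v j := by rw [hwdef]; simp
        rw [hwj]
        nlinarith [hq]
      have expand : ∀ z z' : Fin 3 → ℝ, z ⬝ᵥ z' = ∑ j, z j * z' j := fun _ _ => rfl
      rw [expand v v, expand w w, expand p p]
      calc (∑ j, v j * v j) + ∑ j, w j * w j = ∑ j, (v j * v j + w j * w j) := by
            rw [Finset.sum_add_distrib]
        _ ≤ ∑ j, lA * (p j * p j + v j * v j) := Finset.sum_le_sum fun j _ => hterm j
        _ = lA * ((∑ j, p j * p j) + ∑ j, v j * v j) := by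
            rw [← Finset.mul_sum, Finset.sum_add_distrib]
    -- final assembly
    rw [sub_mulVec, dotProduct_sub, hATA, smul_mulVec, dotProduct_smul, hQx,
      smul_eq_mul]
    have hfin1 : v ⬝ᵥ v + w ⬝ᵥ w ≤ lA * ((m : ℝ) * (u ⬝ᵥ (P *ᵥ u)) + v ⬝ᵥ v) := by
      nlinarith [h3, h1, hlApos]
    have hfin2 : lA * ((m : ℝ) * (u ⬝ᵥ (P *ᵥ u)) + v ⬝ᵥ v) ≤
        (lA * (m : ℝ)) * (u ⬝ᵥ (P *ᵥ u) + (m : ℝ) * (v ⬝ᵥ v)) := by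
      have hm2 : (1:ℝ) ≤ (m:ℝ) ^ 2 := by nlinarith [hm1]
      have hkey : 0 ≤ lA * (v ⬝ᵥ v) * ((m:ℝ) ^ 2 - 1) :=
        mul_nonneg (mul_nonneg hlApos.le hvv_nonneg) (by linarith)
      nlinarith [hkey]
    have hfin3 : (lA * (m : ℝ)) * (u ⬝ᵥ (P *ᵥ u) + (m : ℝ) * (v ⬝ᵥ v)) ≤
        c * (c3 * (u ⬝ᵥ (P *ᵥ u)) + c2 * (u ⬝ᵥ (P *ᵥ v)) + c2 * (v ⬝ᵥ (P *ᵥ u))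
          + (m : ℝ) * c1 * (v ⬝ᵥ v)) := by
      rw [← hclQ, ← hsymdot]
      have := mul_le_mul_of_nonneg_left h2 hcpos.le
      nlinarith [this]
    linarith [hfin1, hfin2, hfin3]
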